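/- Let M be a ℤ-lattice in V, and let N ⊆ M be a primitive ℤ-submodule such that the restriction of b to the ℚ-span of N is nondegenerate. Then the map sending m ∈ M to the homomorphism (y ↦ b(m,y)) ∈ Hom_ℤ(N^⊥, ℤ) induces an injective homomorphism of abelian groups M/(N + N^⊥) → (N^⊥)^∨/N^⊥ (the cokernel of the natural map N^⊥ → (N^⊥)^∨); consequently [M : N + N^⊥] ≤ [(N^⊥)^∨ : N^⊥]. -/

import Mathlib

section Aux

variable {V : Type*} [AddCommGroup V] [Module ℚ V]

/-- Clearing denominators: an element of the `ℚ`-span of a `ℤ`-submodule has a nonzero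
integer multiple inside the submodule. -/
lemma aux_exists_int_smul_mem (P : Submodule ℤ V) (v : V)
    (hv : v ∈ Submodule.span ℚ (P : Set V)) : ∃ k : ℤ, k ≠ 0 ∧ k • v ∈ P := by
  induction hv using Submodule.span_induction with
  | mem x hx => exact ⟨1, one_ne_zero, by simpa using hx⟩
  | zero => exact ⟨1, one_ne_zero, by simp⟩
  | add x y hx hy ihx ihy =>
    obtain ⟨k, hk, hkx⟩ := ihx
    obtain ⟨l, hl, hly⟩ := ihy
    refine ⟨k * l, mul_ne_zero hk hl, ?_⟩
    have : (k * l) • (x + y) = l • (k • x) + k • (l • y) := by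
      rw [smul_add, smul_smul, smul_smul, mul_comm l k]
    rw [this]
    exact P.add_mem (P.smul_mem _ hkx) (P.smul_mem _ hly)
  | smul q x hx ih =>
    obtain ⟨k, hk, hkx⟩ := ih
    refine ⟨(q.den : ℤ) * k, mul_ne_zero (Int.natCast_ne_zero.mpr q.den_nz) hk, ?_⟩
    have hden : ((q.den : ℚ)) ≠ 0 := by exact_mod_cast q.den_nz
    have hq : q * (q.den : ℚ) = (q.num : ℚ) := (eq_div_iff hden).mp (Rat.num_div_den q).symm
    have key : ((q.den : ℤ) * k) • (q • x) = q.num • (k • x) := by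
      have h2 : q.num • (k • x) = ((q.num * k : ℤ) : ℚ) • x := by
        rw [Int.cast_smul_eq_zsmul ℚ, mul_smul]
      rw [← Int.cast_smul_eq_zsmul ℚ ((q.den : ℤ) * k), smul_smul, h2]
      congr 1
      push_cast
      rw [mul_assoc, mul_comm (k : ℚ) q, ← mul_assoc, mul_comm ((q.den : ℚ)) q, hq]
    rw [key]
    exact P.smul_mem _ hkx

end Aux

/-- Let `M` be a `ℤ`-lattice in `V` and `N ⊆ M` a primitive
`ℤ`-submodule such that the restriction of `b` to the `ℚ`-span of `N` is nondegenerate.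
Then `m ↦ (y ↦ b(m,y))` induces an injective homomorphism
`M/(N + N^⊥) → (N^⊥)^∨/N^⊥`; consequently `[M : N + N^⊥] ≤ [(N^⊥)^∨ : N^⊥]`. -/
theorem stmt4
    {V : Type*} [AddCommGroup V] [Module ℚ V] [FiniteDimensional ℚ V]
    (b : LinearMap.BilinForm ℚ V)
    (hsymm : ∀ x y : V, b x y = b y x)
    (hnd : ∀ v : V, (∀ w : V, b v w = 0) → v = 0)
    -- M is a ℤ-lattice in V
    (M : Submodule ℤ V) (hMfg : M.FG)
    (hMspan : Submodule.span ℚ (M : Set V) = ⊤)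
    (hMint : ∀ x ∈ M, ∀ y ∈ M, ∃ k : ℤ, b x y = (k : ℚ))
    -- N ⊆ M primitive, with nondegenerate restriction of b to its ℚ-span
    (N : Submodule ℤ V) (hNM : N ≤ M)
    (hprim : ∀ m ∈ M, ∀ k : ℤ, k ≠ 0 → k • m ∈ N → m ∈ N)
    (hNnd : ∀ v ∈ Submodule.span ℚ (N : Set V),
      (∀ w ∈ Submodule.span ℚ (N : Set V), b v w = 0) → v = 0)
    -- N^⊥, the orthogonal complement of N inside M
    (Nperp : Submodule ℤ V)
    (hNperpdef : ∀ x : V, x ∈ Nperp ↔ x ∈ M ∧ ∀ n ∈ N, b x n = 0)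
    -- the natural map N^⊥ → (N^⊥)^∨ = Hom_ℤ(N^⊥, ℤ)
    (ψ : Nperp →ₗ[ℤ] (Nperp →ₗ[ℤ] ℤ))
    (hψ : ∀ n x : Nperp, ((ψ n x : ℤ) : ℚ) = b (x : V) (n : V))
    -- the map M → Hom_ℤ(N^⊥, ℤ), m ↦ (y ↦ b(m,y))
    (ρ : M →ₗ[ℤ] (Nperp →ₗ[ℤ] ℤ))
    (hρ : ∀ (m : M) (y : Nperp), ((ρ m y : ℤ) : ℚ) = b (m : V) (y : V)) :
    (∃ g : (M ⧸ ((N ⊔ Nperp).comap M.subtype)) →ₗ[ℤ]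
        ((Nperp →ₗ[ℤ] ℤ) ⧸ LinearMap.range ψ),
      Function.Injective g ∧
        ∀ m : M, g (Submodule.Quotient.mk m) = Submodule.Quotient.mk (ρ m)) ∧
    Nat.card (M ⧸ ((N ⊔ Nperp).comap M.subtype)) ≤
      Nat.card ((Nperp →ₗ[ℤ] ℤ) ⧸ LinearMap.range ψ) := by
  classical
  have hrefl : b.IsRefl := fun x y h => by rw [hsymm]; exact h
  set W : Submodule ℚ V := Submodule.span ℚ (N : Set V) with hWdef
  -- nondegeneracy of the restriction of b to W
  have hWnd : (b.restrict W).Nondegenerate := by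
    refine ⟨?_, ?_⟩
    · rintro ⟨v, hv⟩ h
      have : v = 0 := hNnd v hv (fun w hw => h ⟨w, hw⟩)
      exact Subtype.ext this
    · rintro ⟨v, hv⟩ h
      exact Subtype.ext (hNnd v hv (fun w hw => (hsymm v w).trans (h ⟨w, hw⟩)))
  have hcompl : IsCompl W (b.orthogonal W) :=
    LinearMap.BilinForm.isCompl_orthogonal_of_restrict_nondegenerate hrefl hWnd
  have hdecomp : ∀ v : V, ∃ w ∈ W, ∃ p ∈ b.orthogonal W, v = w + p := by
    intro v
    have hv : v ∈ W ⊔ b.orthogonal W := by rw [hcompl.sup_eq_top]; trivial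
    obtain ⟨w, hw, p, hp, h⟩ := Submodule.mem_sup.mp hv
    exact ⟨w, hw, p, hp, h.symm⟩
  -- Nperp lands inside the b-orthogonal of W
  have hNperpW : ∀ x ∈ Nperp, x ∈ b.orthogonal W := by
    intro x hx
    intro n hn
    show b n x = 0
    induction hn using Submodule.span_induction with
    | mem z hz => exact hrefl _ _ (((hNperpdef x).mp hx).2 z hz)
    | zero => rw [map_zero, LinearMap.zero_apply]
    | add z y _ _ ihz ihy => rw [map_add, LinearMap.add_apply, ihz, ihy, add_zero]
    | smul a z _ ih => rw [map_smul, LinearMap.smul_apply, ih, smul_zero]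
  -- every element of the b-orthogonal of W has a multiple in Nperp
  have hD : ∀ p ∈ b.orthogonal W, ∃ k : ℤ, k ≠ 0 ∧ k • p ∈ Nperp := by
    intro p hp
    obtain ⟨k, hk, hkM⟩ := aux_exists_int_smul_mem M p (by rw [hMspan]; trivial)
    refine ⟨k, hk, (hNperpdef _).mpr ⟨hkM, fun n hn => ?_⟩⟩
    have h0 : b p n = 0 := hsymm p n ▸ hp n (Submodule.subset_span hn)
    rw [← Int.cast_smul_eq_zsmul ℚ]
    simp [h0]
  -- key vanishing criterion
  have hE : ∀ x ∈ b.orthogonal W, (∀ y ∈ Nperp, b x y = 0) → x = 0 := by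
    intro x hxW hxperp
    refine hnd x (fun v => ?_)
    obtain ⟨w, hw, p, hp, rfl⟩ := hdecomp v
    have h1 : b x w = 0 := hsymm x w ▸ hxW w hw
    have h2 : b x p = 0 := by
      obtain ⟨k, hk, hkp⟩ := hD p hp
      have := hxperp _ hkp
      rw [← Int.cast_smul_eq_zsmul ℚ] at this
      simp only [map_smul, smul_eq_mul] at this
      rcases mul_eq_zero.mp this with h | h
      · exact absurd (by exact_mod_cast h) hk
      · exact h
    simp [h1, h2]
  -- main claim: an element of M orthogonal to all of Nperp lies in N
  have hmain : ∀ x ∈ M, (∀ y ∈ Nperp, b x y = 0) → x ∈ N := by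
    intro x hxM hxperp
    obtain ⟨w, hwW, p, hpW, rfl⟩ := hdecomp x
    have hp0 : p = 0 := by
      refine hE p hpW (fun y hy => ?_)
      have h1 : b (w + p) y = 0 := hxperp y hy
      have h2 : b w y = 0 := hNperpW y hy w hwW
      rw [map_add] at h1
      simpa [h2] using h1
    rw [hp0, add_zero] at hxM ⊢
    obtain ⟨k, hk, hkN⟩ := aux_exists_int_smul_mem N w hwW
    exact hprim w hxM k hk hkN
  -- the quotient map setup
  set K : Submodule ℤ M := (N ⊔ Nperp).comap M.subtype with hKdef
  set Q : Submodule ℤ (Nperp →ₗ[ℤ] ℤ) := LinearMap.range ψ with hQdef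
  set φ : M →ₗ[ℤ] ((Nperp →ₗ[ℤ] ℤ) ⧸ Q) := Q.mkQ.comp ρ with hφdef
  have hwd : K ≤ LinearMap.ker φ := by
    intro m hm
    obtain ⟨n, hn, p, hp, hnp⟩ := Submodule.mem_sup.mp hm
    have hρψ : ρ m = ψ ⟨p, hp⟩ := by
      ext y
      have hcast : ((ρ m y : ℤ) : ℚ) = ((ψ ⟨p, hp⟩ y : ℤ) : ℚ) := by
        rw [hρ, hψ]
        have hm' : (m : V) = n + p := hnp.symm
        rw [hm', map_add, LinearMap.add_apply]
        have h0 : b n (y : V) = 0 := hrefl _ _ (((hNperpdef y).mp y.2).2 n hn)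
        rw [h0, zero_add, hsymm]
      exact_mod_cast hcast
    simp only [LinearMap.mem_ker, hφdef, LinearMap.comp_apply, Submodule.mkQ_apply,
      Submodule.Quotient.mk_eq_zero, hρψ]
    exact LinearMap.mem_range_self ψ _
  have hker : LinearMap.ker φ ≤ K := by
    intro m hm
    have : ρ m ∈ Q := by
      simpa [hφdef, Submodule.Quotient.mk_eq_zero] using hm
    obtain ⟨p, hp⟩ := this
    have hsub : ((m : V) - p) ∈ N := by
      refine hmain _ (sub_mem m.2 ((hNperpdef p).mp p.2).1) (fun y hy => ?_)
      have h1 : ((ρ m ⟨y, hy⟩ : ℤ) : ℚ) = b (m : V) y := hρ m ⟨y, hy⟩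
      have h2 : ((ψ p ⟨y, hy⟩ : ℤ) : ℚ) = b y (p : V) := hψ p ⟨y, hy⟩
      have h3 : (ψ p) ⟨y, hy⟩ = (ρ m) ⟨y, hy⟩ := by rw [hp]
      rw [map_sub, LinearMap.sub_apply, ← h1, hsymm (p : V) y, ← h2, h3, sub_self]
    show (m : V) ∈ N ⊔ Nperp
    have hmeq : (m : V) = ((m : V) - p) + p := by abel
    rw [hmeq]
    exact Submodule.add_mem _ (Submodule.mem_sup_left hsub) (Submodule.mem_sup_right p.2)
  set g : (M ⧸ K) →ₗ[ℤ] ((Nperp →ₗ[ℤ] ℤ) ⧸ Q) := K.liftQ φ hwd with hgdef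
  have hginj : Function.Injective g :=
    LinearMap.ker_eq_bot.mp (Submodule.ker_liftQ_eq_bot K φ hwd hker)
  have hgmk : ∀ m : M, g (Submodule.Quotient.mk m) = Submodule.Quotient.mk (ρ m) := by
    intro m
    rfl
  refine ⟨⟨g, hginj, hgmk⟩, ?_⟩
  -- finiteness of the target
  haveI : NoZeroSMulDivisors ℤ V :=
    @IsAddTorsionFree.to_noZeroSMulDivisors_int V _ (IsAddTorsionFree.of_module_rat V)
  haveI : IsNoetherian ℤ M := isNoetherian_of_fg_of_noetherian M hMfg
  have hle : Nperp ≤ M := fun x hx => ((hNperpdef x).mp hx).1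
  haveI : Module.Finite ℤ (Nperp.comap M.subtype) :=
    Module.Finite.iff_fg.mpr (IsNoetherian.noetherian _)
  haveI : Module.Finite ℤ Nperp :=
    Module.Finite.equiv (Submodule.comapSubtypeEquivOfLe hle)
  haveI : Module.Free ℤ Nperp := Module.free_of_finite_type_torsion_free'
  haveI : Module.Finite ℤ (Nperp →ₗ[ℤ] ℤ) :=
    inferInstanceAs (Module.Finite ℤ (Module.Dual ℤ Nperp))
  -- torsion of the cokernel of ψ
  set ι := Module.Free.ChooseBasisIndex ℤ Nperp
  set c : Module.Basis ι ℤ Nperp := Module.Free.chooseBasis ℤ Nperp with hcdef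
  set v : ι → V := fun i => (c i : V) with hvdef
  have hliZ : LinearIndependent ℤ v := by
    have := c.linearIndependent
    have h2 := this.map' Nperp.subtype (Submodule.ker_subtype Nperp)
    exact h2
  have hli : LinearIndependent ℚ v := (LinearIndependent.iff_fractionRing ℤ ℚ).mp hliZ
  set U : Submodule ℚ V := Submodule.span ℚ (Set.range v) with hUdef
  have hspanv : Submodule.span ℤ (Set.range v) = Nperp := by
    have h1 : Set.range v = Nperp.subtype '' Set.range c := by
      rw [← Set.range_comp]; rfl
    rw [h1, ← Submodule.map_span, c.span_eq, Submodule.map_top,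
      Submodule.range_subtype]
  have hmemU : ∀ x ∈ Nperp, x ∈ U := by
    intro x hx
    have hxs : x ∈ Submodule.span ℤ (Set.range v) := by rw [hspanv]; exact hx
    clear hx
    induction hxs using Submodule.span_induction with
    | mem z hz => exact Submodule.subset_span hz
    | zero => exact U.zero_mem
    | add z y _ _ ihz ihy => exact U.add_mem ihz ihy
    | smul a z _ ih => rw [← Int.cast_smul_eq_zsmul ℚ]; exact U.smul_mem _ ih
  have hUW : U ≤ LinearMap.BilinForm.orthogonal b W := by
    rw [hUdef, Submodule.span_le]
    rintro _ ⟨i, rfl⟩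
    exact hNperpW _ (c i).2
  haveI : FiniteDimensional ℚ U := inferInstance
  have hUnd : (b.restrict U).Nondegenerate := by
    refine ⟨?_, ?_⟩
    · rintro ⟨u, hu⟩ h
      refine Subtype.ext (hE u (hUW hu) (fun y hy => ?_))
      exact h ⟨y, hmemU y hy⟩
    · rintro ⟨u, hu⟩ h
      refine Subtype.ext (hE u (hUW hu) (fun y hy => ?_))
      exact (hsymm u y).trans (h ⟨y, hmemU y hy⟩)
  set bU : Module.Basis ι ℚ U := Module.Basis.span hli with hbUdef
  have htors : ∀ f : (Nperp →ₗ[ℤ] ℤ), ∃ k : ℤ, k ≠ 0 ∧ k • f ∈ Q := by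
    intro f
    set F : U →ₗ[ℚ] ℚ := bU.constr ℚ (fun i => ((f (c i) : ℤ) : ℚ)) with hFdef
    -- F agrees with f on Nperp
    have hFf : ∀ x : Nperp, F ⟨(x : V), hmemU _ x.2⟩ = ((f x : ℤ) : ℚ) := by
      set j : Nperp →ₗ[ℤ] (U.restrictScalars ℤ) :=
        LinearMap.codRestrict (U.restrictScalars ℤ) Nperp.subtype
          (fun x => hmemU _ x.2) with hjdef
      set g1 : Nperp →ₗ[ℤ] ℚ := (F.restrictScalars ℤ).comp j with hg1def
      set g2 : Nperp →ₗ[ℤ] ℚ := (Algebra.linearMap ℤ ℚ).comp f with hg2def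
      have : g1 = g2 := by
        refine c.ext (fun i => ?_)
        have h1 : g1 (c i) = F (bU i) := by
          have : (bU i : V) = v i := congrArg Subtype.val (Module.Basis.span_apply hli i)
          simp only [hg1def, LinearMap.comp_apply, LinearMap.restrictScalars_apply]
          show F (j (c i)) = F (bU i)
          congr 1
          exact Subtype.ext this.symm
        rw [h1, hFdef, Module.Basis.constr_basis]
        simp [hg2def]
      intro x
      have := congrFun (congrArg (fun h => h.toFun) this) x
      exact this
    -- represent F by an element of U using nondegeneracy
    set u : U := (LinearMap.BilinForm.toDual (b.restrict U) hUnd).symm F with hudef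
    have hu : ∀ y : U, b (u : V) (y : V) = F y := by
      intro y
      have := LinearMap.BilinForm.apply_toDual_symm_apply (B := b.restrict U)
        (hB := hUnd) F y
      simpa using this
    obtain ⟨k, hk, hkNperp⟩ := hD (u : V) (hUW u.2)
    refine ⟨k, hk, ⟨⟨k • (u : V), hkNperp⟩, ?_⟩⟩
    ext y
    have hcast : ((ψ ⟨k • (u : V), hkNperp⟩ y : ℤ) : ℚ) = (((k • f) y : ℤ) : ℚ) := by
      rw [hψ]
      show b (y : V) (k • (u : V)) = _
      rw [← Int.cast_smul_eq_zsmul ℚ, map_smul, smul_eq_mul]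
      rw [hsymm (y : V) (u : V), hu ⟨(y : V), hmemU _ y.2⟩, hFf y,
        LinearMap.smul_apply, smul_eq_mul]
      push_cast
      ring
    exact_mod_cast hcast
  -- cokernel of ψ is finitely generated and torsion, hence finite
  have hTtors : Module.IsTorsion ℤ ((Nperp →ₗ[ℤ] ℤ) ⧸ Q) := by
    intro x
    obtain ⟨f, rfl⟩ := Submodule.Quotient.mk_surjective Q x
    obtain ⟨k, hk, hkf⟩ := htors f
    refine ⟨⟨k, mem_nonZeroDivisors_of_ne_zero hk⟩, ?_⟩
    show k • (Submodule.Quotient.mk f : (Nperp →ₗ[ℤ] ℤ) ⧸ Q) = 0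
    rw [← Submodule.Quotient.mk_smul, Submodule.Quotient.mk_eq_zero]
    exact hkf
  haveI : Finite ((Nperp →ₗ[ℤ] ℤ) ⧸ Q) := Module.finite_of_fg_torsion _ hTtors
  exact Nat.card_le_card_of_injective g hginj
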